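/- For any integers r and χ with 2 ≤ χ ≤ r + 1, there exists a finite simple graph G that is r-regular and has chromatic number exactly χ. -/

import Mathlib

open SimpleGraph

private lemma parity_filter_card (t p : ℕ) (hp : p < 2) :
    (Finset.univ.filter (fun x : Fin (2*t) => x.val % 2 = p)).card = t := by
  have := Finset.card_nbij' (s := Finset.univ.filter (fun x : Fin (2*t) => x.val % 2 = p))
    (t := (Finset.univ : Finset (Fin t)))
    (fun x : Fin (2*t) => (⟨x.val / 2, by omega⟩ : Fin t))
    (fun y : Fin t => (⟨2 * y.val + p, by omega⟩ : Fin (2*t)))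
    (by intro a ha; simp)
    (by intro a ha; simp only [Finset.mem_coe, Finset.mem_filter, Finset.mem_univ, true_and]; omega)
    (by intro a ha
        simp only [Finset.mem_coe, Finset.mem_filter, Finset.mem_univ, true_and] at ha
        apply Fin.ext; simp; omega)
    (by intro a ha; apply Fin.ext; simp; omega)
  simpa using this

private def prodGraph (k t : ℕ) : SimpleGraph (Fin k × Fin (2*t)) where
  Adj x y := (x.1 ≠ y.1 ∧ x.2 = y.2) ∨ (x.1 = y.1 ∧ x.2.val % 2 ≠ y.2.val % 2)
  symm := by
    constructor
    rintro x y (⟨h1, h2⟩ | ⟨h1, h2⟩)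
    · exact Or.inl ⟨h1.symm, h2.symm⟩
    · exact Or.inr ⟨h1.symm, h2.symm⟩
  loopless := by constructor; rintro x (⟨h1, _⟩ | ⟨_, h2⟩) <;> simp at *

private lemma prodGraph_degree (k t : ℕ) (hk : 1 ≤ k) (v : Fin k × Fin (2*t)) :
    ((prodGraph k t).neighborSet v).ncard = (k - 1) + t := by
  classical
  have h1 : (prodGraph k t).neighborSet v =
      ↑((Finset.univ.filter (fun y : Fin k × Fin (2*t) => y.1 ≠ v.1 ∧ y.2 = v.2)) ∪
        (Finset.univ.filter (fun y : Fin k × Fin (2*t) =>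
          y.1 = v.1 ∧ y.2.val % 2 ≠ v.2.val % 2))) := by
    ext y
    simp only [neighborSet, prodGraph, Set.mem_setOf_eq, Finset.coe_union, Set.mem_union,
      Finset.coe_filter, Finset.mem_univ, true_and]
    constructor
    · rintro (⟨a, b⟩ | ⟨a, b⟩)
      · exact Or.inl ⟨a.symm, b.symm⟩
      · exact Or.inr ⟨a.symm, fun h => b h.symm⟩
    · rintro (⟨a, b⟩ | ⟨a, b⟩)
      · exact Or.inl ⟨a.symm, b.symm⟩
      · exact Or.inr ⟨a.symm, fun h => b h.symm⟩
  rw [h1, Set.ncard_coe_finset, Finset.card_union_of_disjoint]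
  · congr 1
    · -- first card = k - 1
      have : (Finset.univ.filter (fun y : Fin k × Fin (2*t) => y.1 ≠ v.1 ∧ y.2 = v.2))
          = (Finset.univ.filter (· ≠ v.1)) ×ˢ (Finset.univ.filter (· = v.2)) := by
        ext ⟨a, b⟩
        simp [Finset.mem_product, and_comm]
      rw [this, Finset.card_product, Finset.filter_ne', Finset.filter_eq']
      simp
    · -- second card = t
      have : (Finset.univ.filter (fun y : Fin k × Fin (2*t) =>
          y.1 = v.1 ∧ y.2.val % 2 ≠ v.2.val % 2))
          = (Finset.univ.filter (· = v.1)) ×ˢ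
            (Finset.univ.filter (fun b : Fin (2*t) => b.val % 2 ≠ v.2.val % 2)) := by
        ext ⟨a, b⟩
        simp [Finset.mem_product]
      rw [this, Finset.card_product, Finset.filter_eq']
      simp only [Finset.mem_univ, if_true, Finset.card_singleton, one_mul]
      rw [Finset.filter_congr (q := fun b : Fin (2*t) => b.val % 2 = 1 - v.2.val % 2)
        (fun b _ => by constructor <;> omega)]
      exact parity_filter_card t _ (by omega)
  · rw [Finset.disjoint_left]
    rintro y hy hy'
    simp only [Finset.mem_filter] at hy hy'
    exact hy.2.1 hy'.2.1

private lemma prodGraph_chrom (k t : ℕ) (hk : 2 ≤ k) (ht : 1 ≤ t) :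
    (prodGraph k t).chromaticNumber = k := by
  obtain ⟨k', rfl⟩ : ∃ k', k = k' + 2 := ⟨k - 2, by omega⟩
  have hne : ∀ a : Fin (k' + 2), a ≠ a + 1 := by
    intro a h
    have : (0 : Fin (k' + 2)) = 1 := by
      have := congrArg (· - a) h
      simpa [add_comm] using this
    simp at this
  let C : (prodGraph (k' + 2) t).Coloring (Fin (k' + 2)) := Coloring.mk
    (fun x => if x.2.val % 2 = 0 then x.1 else x.1 + 1)
    (by
      rintro x y (⟨h1, h2⟩ | ⟨h1, h2⟩)
      · rw [h2]
        split_ifs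
        · exact h1
        · exact fun h => h1 (add_right_cancel h)
      · rw [h1]
        rcases (by omega : x.2.val % 2 = 0 ∨ x.2.val % 2 = 1) with hx | hx <;>
          rcases (by omega : y.2.val % 2 = 0 ∨ y.2.val % 2 = 1) with hy | hy <;>
          simp only [hx, hy] at h2 ⊢ <;> first
            | exact absurd rfl h2
            | simpa using hne y.1
            | simpa using (hne y.1).symm)
  have hemb : (⊤ : SimpleGraph (Fin (k' + 2))) ↪g prodGraph (k' + 2) t := by
    refine ⟨⟨fun a => (a, ⟨0, by omega⟩), fun a b h => congrArg Prod.fst h⟩, ?_⟩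
    intro a b
    simp only [prodGraph, top_adj, Function.Embedding.coeFn_mk]
    constructor
    · rintro (⟨h1, _⟩ | ⟨_, h2⟩)
      · exact h1
      · exact absurd rfl h2
    · exact fun h => Or.inl ⟨h, rfl⟩
  refine le_antisymm ?_ ?_
  · simpa using C.colorable.chromaticNumber_le
  · have := chromaticNumber_mono_of_hom hemb.toHom
    rwa [chromaticNumber_top, Fintype.card_fin] at this

/-- For any integers `r` and `χ` with `2 ≤ χ ≤ r + 1`, there exists a finite simple
graph that is `r`-regular and has chromatic number exactly `χ`. -/
theorem exists_regular_graph_with_chromaticNumber (r χ : ℕ)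
    (h2 : 2 ≤ χ) (hr : χ ≤ r + 1) :
    ∃ (n : ℕ) (G : SimpleGraph (Fin n)),
      (∀ v, (G.neighborSet v).ncard = r) ∧ G.chromaticNumber = χ := by
  rcases eq_or_lt_of_le hr with heq | hlt
  · -- χ = r + 1 : complete graph
    refine ⟨r + 1, ⊤, fun v => ?_, ?_⟩
    · have h : (⊤ : SimpleGraph (Fin (r+1))).neighborSet v = {v}ᶜ := by
        ext w; simp [eq_comm, Ne]
      rw [h, Set.ncard_eq_toFinset_card']
      simp [Finset.card_compl]
    · rw [chromaticNumber_top, Fintype.card_fin, heq]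
  · -- χ ≤ r : product construction
    have hχr : χ ≤ r := by omega
    set t := r + 1 - χ with htdef
    have ht : 1 ≤ t := by omega
    let e : Fin χ × Fin (2*t) ≃ Fin (χ * (2*t)) := finProdFinEquiv
    refine ⟨χ * (2*t), (prodGraph χ t).comap e.symm, fun v => ?_, ?_⟩
    · have h : ((prodGraph χ t).comap (e.symm : Fin (χ*(2*t)) → Fin χ × Fin (2*t))).neighborSet v
          = e '' ((prodGraph χ t).neighborSet (e.symm v)) := by
        ext y
        simp only [neighborSet, comap_adj, Set.mem_setOf_eq, Set.mem_image]
        constructor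
        · exact fun hadj => ⟨e.symm y, hadj, by simp⟩
        · rintro ⟨z, hz, rfl⟩; simpa using hz
      rw [h, Set.ncard_image_of_injective _ e.injective,
        prodGraph_degree χ t (by omega) (e.symm v)]
      omega
    · have iso : (prodGraph χ t).comap (e.symm : Fin (χ*(2*t)) → Fin χ × Fin (2*t))
          ≃g prodGraph χ t := SimpleGraph.Iso.comap e.symm (prodGraph χ t)
      have h1 := chromaticNumber_mono_of_hom iso.toEmbedding.toHom
      have h2' := chromaticNumber_mono_of_hom iso.symm.toEmbedding.toHom
      rw [prodGraph_chrom χ t h2 ht] at h1 h2'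
      exact le_antisymm h1 h2'
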